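/- Let G be an abelian group written additively, let n ≥ 1, let P : G → ℝ be a homogeneous polynomial of degree n on G, and let MP : Gⁿ → ℝ be its n-polarization. Then for all a₁,…,a_n, b₁,…,b_n ∈ G, MP(a₁ − b₁, …, a_n − b_n) = (1/n!) · Σ_{I ⊆ {1,…,n}} (−1)^{|J|} · P( Σ_{i∈I} aᵢ + Σ_{j∈J} b_j ), where the sum runs over all subsets I of {1,…,n} (including the empty set) and J = {1,…,n} \ I. -/

import Mathlib

/-- A function `P : G → ℝ` on an abelian group `G` is a *homogeneous polynomial
of degree `n` on `G`* if for every tuple `(a₁, …, a_m)` of elements of `G` there is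
a homogeneous real polynomial `p` of degree `n` in `m` variables such that
`P (k₁ • a₁ + ⋯ + k_m • a_m) = p (k₁, …, k_m)` for all nonnegative integers `kᵢ`. -/
def IsHomogeneousPolynomialOn {G : Type*} [AddCommMonoid G] (n : ℕ) (P : G → ℝ) : Prop :=
  ∀ (m : ℕ) (a : Fin m → G), ∃ p : MvPolynomial (Fin m) ℝ, p.IsHomogeneous n ∧
    ∀ k : Fin m → ℕ, P (∑ i, k i • a i) = MvPolynomial.eval (fun i => (k i : ℝ)) p

/-- An *`n`-polarization* of `P : G → ℝ` is a function `MP : Gⁿ → ℝ` agreeing with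
`P` on the diagonal, symmetric under permutations of its arguments, and additive in
each argument. -/
def IsPolarization {G : Type*} [AddCommMonoid G] (n : ℕ) (P : G → ℝ)
    (MP : (Fin n → G) → ℝ) : Prop :=
  (∀ a : G, MP (fun _ => a) = P a) ∧
  (∀ (σ : Equiv.Perm (Fin n)) (a : Fin n → G), MP (a ∘ σ) = MP a) ∧
  (∀ (a : Fin n → G) (i : Fin n) (x y : G),
    MP (Function.update a i (x + y)) =
      MP (Function.update a i x) + MP (Function.update a i y))

open Finset in
/-- Key sign expansion: `∑_S (-1)^{|Sᶜ|} F(S.piecewise u v) = F(u - v)`. -/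
private lemma polar_lemB {G : Type*} [AddCommGroup G] {n : ℕ}
    (F : MultilinearMap ℤ (fun _ : Fin n => G) ℝ) (u v : Fin n → G) :
    ∑ S : Finset (Fin n), (-1 : ℝ) ^ (Sᶜ.card) * F (S.piecewise u v)
      = F (fun j => u j - v j) := by
  classical
  have h1 : (fun j => u j - v j) = u + (-v) := by
    funext j; simp [sub_eq_add_neg]
  rw [h1, F.map_add_univ]
  refine Finset.sum_congr rfl fun S _ => ?_
  have h2 : S.piecewise u (-v)
      = Sᶜ.piecewise (fun i => (-1 : ℤ) • (S.piecewise u v i)) (S.piecewise u v) := by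
    funext j
    by_cases hj : j ∈ S <;> simp [Finset.piecewise, hj]
  rw [h2, F.map_piecewise_smul, Finset.prod_const, zsmul_eq_mul]
  push_cast
  ring

open Finset in
/-- If `r` is not bijective, the signed sum vanishes. -/
private lemma polar_zero {G : Type*} [AddCommGroup G] {n : ℕ}
    (F : MultilinearMap ℤ (fun _ : Fin n => G) ℝ) (a b : Fin n → G)
    (r : Fin n → Fin n) (hr : ¬ Function.Bijective r) :
    ∑ I : Finset (Fin n), (-1 : ℝ) ^ (Iᶜ.card) * F (fun j => I.piecewise a b (r j)) = 0 := by
  classical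
  have hsurj : ¬ Function.Surjective r := by
    intro h
    exact hr (Finite.surjective_iff_bijective.mp h)
  rw [Function.Surjective] at hsurj
  push_neg at hsurj
  obtain ⟨i₀, hi₀⟩ := hsurj
  set f : Finset (Fin n) → ℝ :=
    fun I => (-1 : ℝ) ^ (Iᶜ.card) * F (fun j => I.piecewise a b (r j)) with hf
  have key : ∀ I : Finset (Fin n),
      f I + f (if i₀ ∈ I then I.erase i₀ else insert i₀ I) = 0 := by
    intro I
    by_cases hI : i₀ ∈ I
    · simp only [hI, if_pos]
      have hFeq : (fun j => (I.erase i₀).piecewise a b (r j))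
          = (fun j => I.piecewise a b (r j)) := by
        funext j
        simp [Finset.piecewise, Finset.mem_erase, hi₀ j]
      have hcard : ((I.erase i₀)ᶜ).card = Iᶜ.card + 1 := by
        rw [Finset.compl_erase, Finset.card_insert_of_notMem (by simp [hI])]
      rw [hf]
      simp only [hFeq, hcard]
      ring
    · simp only [hI, if_neg, not_false_iff]
      have hFeq : (fun j => (insert i₀ I).piecewise a b (r j))
          = (fun j => I.piecewise a b (r j)) := by
        funext j
        simp [Finset.piecewise, Finset.mem_insert, hi₀ j]
      have hcard : Iᶜ.card = ((insert i₀ I)ᶜ).card + 1 := by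
        rw [Finset.compl_insert, Finset.card_erase_of_mem (by simp [hI])]
        have : 1 ≤ Iᶜ.card := Finset.card_pos.mpr ⟨i₀, by simp [hI]⟩
        omega
      rw [hf]
      simp only [hFeq, hcard]
      ring
  refine Finset.sum_ninvolution (fun I => if i₀ ∈ I then I.erase i₀ else insert i₀ I)
    key ?_ (fun _ => Finset.mem_univ _) ?_
  · intro I _
    by_cases hI : i₀ ∈ I
    · simp only [hI, if_pos]
      intro h
      exact Finset.notMem_erase i₀ I (h.symm ▸ hI)
    · simp only [hI, if_neg, not_false_iff]
      intro h
      exact hI (h ▸ Finset.mem_insert_self i₀ I)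
  · intro I
    by_cases hI : i₀ ∈ I
    · simp [hI, Finset.insert_erase hI]
    · simp [hI, Finset.erase_insert hI]

open Finset in
/-- If `r` is bijective, the signed sum equals `F (a - b)` pre-composed with `r`. -/
private lemma polar_bij {G : Type*} [AddCommGroup G] {n : ℕ}
    (F : MultilinearMap ℤ (fun _ : Fin n => G) ℝ) (a b : Fin n → G)
    (r : Fin n → Fin n) (hr : Function.Bijective r) :
    ∑ I : Finset (Fin n), (-1 : ℝ) ^ (Iᶜ.card) * F (fun j => I.piecewise a b (r j))
      = F (fun j => a (r j) - b (r j)) := by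
  classical
  set σ : Equiv.Perm (Fin n) := Equiv.ofBijective r hr with hσ
  have hσr : ∀ j, σ j = r j := fun j => rfl
  have step : ∑ I : Finset (Fin n), (-1 : ℝ) ^ (Iᶜ.card) * F (fun j => I.piecewise a b (r j))
      = ∑ S : Finset (Fin n),
          (-1 : ℝ) ^ (Sᶜ.card) * F (S.piecewise (fun j => a (r j)) (fun j => b (r j))) := by
    refine (Fintype.sum_equiv σ.finsetCongr
      (fun S => (-1 : ℝ) ^ (Sᶜ.card) * F (S.piecewise (fun j => a (r j)) (fun j => b (r j))))
      (fun I => (-1 : ℝ) ^ (Iᶜ.card) * F (fun j => I.piecewise a b (r j))) ?_).symm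
    intro S
    have hc : ((σ.finsetCongr S)ᶜ).card = (Sᶜ).card := by
      rw [Finset.card_compl, Finset.card_compl, Equiv.finsetCongr_apply, Finset.card_map]
    have hFeq : (fun j => (σ.finsetCongr S).piecewise a b (r j))
        = S.piecewise (fun j => a (r j)) (fun j => b (r j)) := by
      funext j
      have hmem : r j ∈ σ.finsetCongr S ↔ j ∈ S := by
        rw [Equiv.finsetCongr_apply, ← hσr j, Finset.mem_map_equiv]
        simp
      by_cases hj : j ∈ S
      · rw [Finset.piecewise_eq_of_mem _ _ _ (hmem.mpr hj),
          Finset.piecewise_eq_of_mem _ _ _ hj]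
      · rw [Finset.piecewise_eq_of_notMem _ _ _ (fun h => hj (hmem.mp h)),
          Finset.piecewise_eq_of_notMem _ _ _ hj]
    rw [hc, hFeq]
  rw [step, polar_lemB]

private lemma polar_card_bij (n : ℕ) :
    (Finset.univ.filter (fun r : Fin n → Fin n => Function.Bijective r)).card
      = n.factorial := by
  classical
  have e : Equiv.Perm (Fin n) ≃ {r : Fin n → Fin n // Function.Bijective r} :=
    { toFun := fun σ => ⟨σ, σ.bijective⟩
      invFun := fun f => Equiv.ofBijective f.1 f.2
      left_inv := fun σ => Equiv.ext fun x => rfl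
      right_inv := fun f => Subtype.ext rfl }
  rw [← Fintype.card_subtype, ← Fintype.card_congr e, Fintype.card_perm, Fintype.card_fin]

/-- For a degree-`n` homogeneous polynomial `P` on an abelian group `G` with
`n`-polarization `MP`, and any `a₁, …, a_n, b₁, …, b_n ∈ G`:
`MP (a₁ - b₁, …, a_n - b_n)
  = (1/n!) ∑_{I ⊆ {1,…,n}} (-1)^{|J|} P (∑_{i ∈ I} aᵢ + ∑_{j ∈ J} b_j)`,
where `J` is the complement of `I`. -/
theorem polarization_on_differences {G : Type*} [AddCommGroup G] (n : ℕ) (hn : 1 ≤ n)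
    (P : G → ℝ) (hP : IsHomogeneousPolynomialOn n P)
    (MP : (Fin n → G) → ℝ) (hMP : IsPolarization n P MP) :
    ∀ a b : Fin n → G,
      MP (fun i => a i - b i) =
        (n.factorial : ℝ)⁻¹ *
          ∑ I : Finset (Fin n), (-1 : ℝ) ^ (Iᶜ.card) *
            P ((∑ i ∈ I, a i) + ∑ j ∈ Iᶜ, b j) := by
  classical
  obtain ⟨hdiag, hsym, hadd⟩ := hMP
  -- Package `MP` as a `ℤ`-multilinear map.
  let F : MultilinearMap ℤ (fun _ : Fin n => G) ℝ :=
    { toFun := MP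
      map_update_add' := by
        intro inst m i x y
        have h : inst = instDecidableEqFin n := Subsingleton.elim _ _
        subst h
        exact hadd m i x y
      map_update_smul' := by
        intro inst m i c x
        have h : inst = instDecidableEqFin n := Subsingleton.elim _ _
        subst h
        have h2 := map_zsmul (AddMonoidHom.mk' (fun z => MP (Function.update m i z))
            (fun x y => hadd m i x y)) c x
        simpa using h2 }
  have hF : ∀ v : Fin n → G, F v = MP v := fun _ => rfl
  intro a b
  have key : ∑ I : Finset (Fin n), (-1 : ℝ) ^ (Iᶜ.card) * P ((∑ i ∈ I, a i) + ∑ j ∈ Iᶜ, b j)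
      = (n.factorial : ℝ) * MP (fun i => a i - b i) := by
    have step1 : ∀ I : Finset (Fin n),
        P ((∑ i ∈ I, a i) + ∑ j ∈ Iᶜ, b j)
          = ∑ r : Fin n → Fin n, F (fun j => I.piecewise a b (r j)) := by
      intro I
      have h1 : (∑ i ∈ I, a i) + ∑ j ∈ Iᶜ, b j = ∑ i, I.piecewise a b i := by
        rw [Finset.sum_piecewise, Finset.univ_inter, ← Finset.compl_eq_univ_sdiff]
      rw [h1, ← hdiag, ← hF]
      exact F.map_sum (fun _ j => I.piecewise a b j)
    calc
      ∑ I : Finset (Fin n), (-1 : ℝ) ^ (Iᶜ.card) * P ((∑ i ∈ I, a i) + ∑ j ∈ Iᶜ, b j)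
          = ∑ I : Finset (Fin n), ∑ r : Fin n → Fin n,
              (-1 : ℝ) ^ (Iᶜ.card) * F (fun j => I.piecewise a b (r j)) := by
            refine Finset.sum_congr rfl fun I _ => ?_
            rw [step1 I, Finset.mul_sum]
      _ = ∑ r : Fin n → Fin n, ∑ I : Finset (Fin n),
              (-1 : ℝ) ^ (Iᶜ.card) * F (fun j => I.piecewise a b (r j)) :=
            Finset.sum_comm
      _ = ∑ r : Fin n → Fin n,
            (if Function.Bijective r then MP (fun i => a i - b i) else 0) := by
            refine Finset.sum_congr rfl fun r _ => ?_
            by_cases hr : Function.Bijective r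
            · rw [if_pos hr, polar_bij F a b r hr]
              have : (fun j => a (r j) - b (r j))
                  = (fun i => a i - b i) ∘ (Equiv.ofBijective r hr) := rfl
              rw [hF, this, hsym]
            · rw [if_neg hr, polar_zero F a b r hr]
      _ = (n.factorial : ℝ) * MP (fun i => a i - b i) := by
            rw [Finset.sum_ite, Finset.sum_const, Finset.sum_const_zero, add_zero,
              polar_card_bij, nsmul_eq_mul]
  rw [key, inv_mul_cancel_left₀]
  exact_mod_cast n.factorial_ne_zero
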